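/- The operators m(s_i) on involutions defined by m(s_i)·τ = τ if τ(i+1) < τ(i); m(s_i)·τ = s_i τ if τ(i) = i and τ(i+1) = i+1; and m(s_i)·τ = s_i τ s_i otherwise, satisfy the braid relation m(s_i)·(m(s_{i+1})·(m(s_i)·τ)) = m(s_{i+1})·(m(s_i)·(m(s_{i+1})·τ)) for all involutions τ ∈ I_n and 1 ≤ i ≤ n-2. -/

import Mathlib

open Finset

/-- The number of inversions (the length) of a permutation. -/
def invCount {n : ℕ} (w : Equiv.Perm (Fin n)) : ℕ :=
  (Finset.univ.filter fun p : Fin n × Fin n => p.1 < p.2 ∧ w p.2 < w p.1).card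

/-- The longest permutation `w_0`. -/
def w0 (n : ℕ) : Equiv.Perm (Fin n) := Fin.revPerm

/-- The Richardson–Springer monoid action of the generator `m(s_i)` on involutions:
`m(s_i)·τ = τ` if `τ(i+1) < τ(i)`; `m(s_i)·τ = s_i τ` if `τ` fixes both `i` and `i+1`;
and `m(s_i)·τ = s_i τ s_i` otherwise. -/
def mAct {n : ℕ} (i : Fin n) (τ : Equiv.Perm (Fin n)) : Equiv.Perm (Fin n) :=
  if h : i.val + 1 < n then
    let j : Fin n := ⟨i.val + 1, h⟩
    let s := Equiv.swap i j
    if τ j < τ i then τ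
    else if τ i = i ∧ τ j = j then s * τ
    else s * τ * s
  else τ

/-- The involution diagram `D̂(τ)`. -/
def invDiagram (n : ℕ) (τ : Equiv.Perm (Fin n)) : Finset (Fin n × Fin n) :=
  Finset.univ.filter fun p => p.2 < τ p.1 ∧ p.1 < τ p.2 ∧ p.1 ≤ p.2

/-- The involution length `ℓ̂(τ) = #D̂(τ)`. -/
def invLen {n : ℕ} (τ : Equiv.Perm (Fin n)) : ℕ := (invDiagram n τ).card

namespace BraidAux

open Equiv

variable {n m : ℕ}

lemma mAct_of_lt (i : Fin n) (hi : i.val + 1 < n) (τ : Perm (Fin n))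
    (h1 : τ ⟨i.val + 1, hi⟩ < τ i) : mAct i τ = τ := by
  simp only [mAct, dif_pos hi, if_pos h1]

lemma mAct_of_fix (i : Fin n) (hi : i.val + 1 < n) (τ : Perm (Fin n))
    (h1 : ¬ τ ⟨i.val + 1, hi⟩ < τ i) (h2 : τ i = i ∧ τ ⟨i.val + 1, hi⟩ = ⟨i.val + 1, hi⟩) :
    mAct i τ = Equiv.swap i ⟨i.val + 1, hi⟩ * τ := by
  simp only [mAct, dif_pos hi, if_neg h1, if_pos h2]

lemma mAct_of_other (i : Fin n) (hi : i.val + 1 < n) (τ : Perm (Fin n))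
    (h1 : ¬ τ ⟨i.val + 1, hi⟩ < τ i) (h2 : ¬ (τ i = i ∧ τ ⟨i.val + 1, hi⟩ = ⟨i.val + 1, hi⟩)) :
    mAct i τ = Equiv.swap i ⟨i.val + 1, hi⟩ * τ * Equiv.swap i ⟨i.val + 1, hi⟩ := by
  simp only [mAct, dif_pos hi, if_neg h1, if_neg h2]

lemma mAct_invol (i : Fin n) (τ : Perm (Fin n)) (hτ : τ * τ = 1) :
    mAct i τ * mAct i τ = 1 := by
  by_cases hi : i.val + 1 < n
  · set j : Fin n := ⟨i.val + 1, hi⟩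
    set s := Equiv.swap i j with hs
    by_cases h1 : τ j < τ i
    · rw [mAct_of_lt i hi τ h1]; exact hτ
    · by_cases h2 : τ i = i ∧ τ j = j
      · rw [mAct_of_fix i hi τ h1 h2]
        have hcomm : τ * s = s * τ := by
          ext x
          by_cases hxi : x = i
          · subst hxi
            simp [hs, Perm.mul_apply, Equiv.swap_apply_left, h2.1, h2.2]
          · by_cases hxj : x = j
            · subst hxj
              simp [hs, Perm.mul_apply, Equiv.swap_apply_right, h2.1, h2.2]
            · have hτxi : τ x ≠ i := fun hh => hxi (by
                rw [← h2.1] at hh; exact τ.injective hh)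
              have hτxj : τ x ≠ j := fun hh => hxj (by
                rw [← h2.2] at hh; exact τ.injective hh)
              simp [hs, Perm.mul_apply, Equiv.swap_apply_of_ne_of_ne hxi hxj,
                Equiv.swap_apply_of_ne_of_ne hτxi hτxj]
        calc s * τ * (s * τ) = s * (τ * s) * τ := by group
          _ = s * (s * τ) * τ := by rw [hcomm]
          _ = (s * s) * (τ * τ) := by group
          _ = 1 := by rw [Equiv.swap_mul_self, hτ, one_mul]
      · rw [mAct_of_other i hi τ h1 h2]
        calc s * τ * s * (s * τ * s) = s * τ * (s * s) * τ * s := by group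
          _ = s * (τ * τ) * s := by rw [Equiv.swap_mul_self]; group
          _ = s * s := by rw [hτ]; group
          _ = 1 := Equiv.swap_mul_self _ _
  · simp only [mAct, dif_neg hi]; exact hτ

lemma apply_apply_of_invol {σ : Perm (Fin n)} (hσ : σ * σ = 1) (x : Fin n) : σ (σ x) = x := by
  have := congrArg (fun π : Perm (Fin n) => π x) hσ
  simpa [Perm.mul_apply] using this

/-- Localization of a permutation preserving a finite window to a permutation of `Fin m`. -/
noncomputable def localize (S : Finset (Fin n)) (h : S.card = m) (σ : Perm (Fin n)) :
    Perm (Fin m) :=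
  if H : ∀ x, x ∈ S ↔ σ x ∈ S then
    (S.orderIsoOfFin h).toEquiv.symm.permCongr (σ.subtypePerm (fun x => (H x).symm))
  else 1

lemma localize_apply (S : Finset (Fin n)) (h : S.card = m) (σ : Perm (Fin n))
    (H : ∀ x, x ∈ S ↔ σ x ∈ S) (y : Fin m) :
    ((S.orderIsoOfFin h) ((localize S h σ) y) : Fin n) = σ (S.orderIsoOfFin h y) := by
  simp [localize, dif_pos H, Equiv.permCongr_apply, Equiv.Perm.subtypePerm_apply]

lemma coe_injective (S : Finset (Fin n)) (h : S.card = m) :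
    Function.Injective fun y : Fin m => ((S.orderIsoOfFin h) y : Fin n) := by
  intro y z hyz
  exact (S.orderIsoOfFin h).injective (Subtype.ext hyz)

lemma localize_invol (S : Finset (Fin n)) (h : S.card = m) (σ : Perm (Fin n))
    (hσ : σ * σ = 1) (H : ∀ x, x ∈ S ↔ σ x ∈ S) :
    localize S h σ * localize S h σ = 1 := by
  apply Equiv.ext
  intro y
  apply coe_injective S h
  simp only [Perm.mul_apply, Perm.one_apply]
  rw [localize_apply S h σ H, localize_apply S h σ H]
  exact apply_apply_of_invol hσ _

theorem mAct_transfer (S : Finset (Fin n)) (h : S.card = m) (σ : Perm (Fin n)) (hσ : σ * σ = 1)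
    (H : ∀ x, x ∈ S ↔ σ x ∈ S) (i : Fin n) (hi : i.val + 1 < n) (p : Fin m) (hp : p.val + 1 < m)
    (hpa : ((S.orderIsoOfFin h p : Fin n)) = i)
    (hpb : ((S.orderIsoOfFin h ⟨p.val + 1, hp⟩ : Fin n)) = ⟨i.val + 1, hi⟩) :
    (∀ y, mAct i σ (S.orderIsoOfFin h y) =
      (S.orderIsoOfFin h (mAct p (localize S h σ) y) : Fin n))
    ∧ (∀ x, x ∉ S → mAct i σ x = σ x) := by
  set e := S.orderIsoOfFin h with he
  set σ' := localize S h σ with hσ'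
  set j : Fin n := ⟨i.val + 1, hi⟩ with hj
  set q : Fin m := ⟨p.val + 1, hp⟩ with hqdef
  have key : ∀ y, (e (σ' y) : Fin n) = σ (e y) := localize_apply S h σ H
  have hinj := coe_injective S h
  have hlt : σ' q < σ' p ↔ σ j < σ i := by
    rw [show (σ' q < σ' p) ↔ (e (σ' q) < e (σ' p)) from (OrderIso.lt_iff_lt e).symm,
      ← Subtype.coe_lt_coe, key, key, hpa, hpb]
  have hfixi : σ' p = p ↔ σ i = i := by
    constructor
    · intro hh
      have := congrArg (fun z => (e z : Fin n)) hh
      simpa [key, hpa] using this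
    · intro hh
      apply hinj
      show (e (σ' p) : Fin n) = e p
      simp only [key, hpa, hh]
  have hfixj : σ' q = q ↔ σ j = j := by
    constructor
    · intro hh
      have := congrArg (fun z => (e z : Fin n)) hh
      simpa [key, hpb] using this
    · intro hh
      apply hinj
      show (e (σ' q) : Fin n) = e q
      simp only [key, hpb, hh]
  have hswap : ∀ z, Equiv.swap i j ((e z : Fin n)) = e (Equiv.swap p q z) := by
    intro z
    rw [← hpa, ← hpb]
    exact hinj.swap_apply p q z
  constructor
  · intro y
    by_cases h1 : σ j < σ i
    · rw [mAct_of_lt i hi σ h1, mAct_of_lt p hp σ' (hlt.mpr h1)]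
      exact (key y).symm
    · by_cases h2 : σ i = i ∧ σ j = j
      · rw [mAct_of_fix i hi σ h1 h2,
          mAct_of_fix p hp σ' (fun hh => h1 (hlt.mp hh)) ⟨hfixi.mpr h2.1, hfixj.mpr h2.2⟩]
        simp only [Perm.mul_apply]
        rw [← key, hswap]
      · rw [mAct_of_other i hi σ h1 h2,
          mAct_of_other p hp σ' (fun hh => h1 (hlt.mp hh))
            (fun hh => h2 ⟨hfixi.mp hh.1, hfixj.mp hh.2⟩)]
        simp only [Perm.mul_apply]
        rw [hswap y, ← key, hswap]
  · intro x hx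
    have hiS : i ∈ S := hpa ▸ (e p).2
    have hjS : j ∈ S := hpb ▸ (e ⟨p.val + 1, hp⟩).2
    have hxi : x ≠ i := fun hh => hx (hh ▸ hiS)
    have hxj : x ≠ j := fun hh => hx (hh ▸ hjS)
    have hσxi : σ x ≠ i := by
      intro hh
      apply hx
      have : x = σ i := by rw [← hh, apply_apply_of_invol hσ]
      rw [this]
      exact (H i).mp hiS
    have hσxj : σ x ≠ j := by
      intro hh
      apply hx
      have : x = σ j := by rw [← hh, apply_apply_of_invol hσ]
      rw [this]
      exact (H j).mp hjS
    by_cases h1 : σ j < σ i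
    · rw [mAct_of_lt i hi σ h1]
    · by_cases h2 : σ i = i ∧ σ j = j
      · rw [mAct_of_fix i hi σ h1 h2]
        simp [Perm.mul_apply, Equiv.swap_apply_of_ne_of_ne hσxi hσxj]
        show (Equiv.swap i j) (σ x) = σ x
        exact Equiv.swap_apply_of_ne_of_ne hσxi hσxj
      · rw [mAct_of_other i hi σ h1 h2]
        simp [Perm.mul_apply, Equiv.swap_apply_of_ne_of_ne hxi hxj,
          Equiv.swap_apply_of_ne_of_ne hσxi hσxj]
        show (Equiv.swap i j) (σ ((Equiv.swap i j) x)) = σ x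
        rw [Equiv.swap_apply_of_ne_of_ne hxi hxj, Equiv.swap_apply_of_ne_of_ne hσxi hσxj]

set_option maxHeartbeats 4000000 in
set_option maxRecDepth 10000 in
lemma braid6 : ∀ (τ : Equiv.Perm (Fin 6)), τ * τ = 1 → ∀ (p : Fin 6), ∀ _ : p.val + 2 < 6,
    mAct p (mAct ⟨p.val + 1, by omega⟩ (mAct p τ)) =
      mAct ⟨p.val + 1, by omega⟩ (mAct p (mAct ⟨p.val + 1, by omega⟩ τ)) := by decide

set_option maxHeartbeats 4000000 in
set_option maxRecDepth 10000 in
lemma braid5 : ∀ (τ : Equiv.Perm (Fin 5)), τ * τ = 1 → ∀ (p : Fin 5), ∀ _ : p.val + 2 < 5,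
    mAct p (mAct ⟨p.val + 1, by omega⟩ (mAct p τ)) =
      mAct ⟨p.val + 1, by omega⟩ (mAct p (mAct ⟨p.val + 1, by omega⟩ τ)) := by decide

set_option maxHeartbeats 4000000 in
set_option maxRecDepth 10000 in
lemma braid4 : ∀ (τ : Equiv.Perm (Fin 4)), τ * τ = 1 → ∀ (p : Fin 4), ∀ _ : p.val + 2 < 4,
    mAct p (mAct ⟨p.val + 1, by omega⟩ (mAct p τ)) =
      mAct ⟨p.val + 1, by omega⟩ (mAct p (mAct ⟨p.val + 1, by omega⟩ τ)) := by decide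

set_option maxHeartbeats 4000000 in
set_option maxRecDepth 10000 in
lemma braid3 : ∀ (τ : Equiv.Perm (Fin 3)), τ * τ = 1 → ∀ (p : Fin 3), ∀ _ : p.val + 2 < 3,
    mAct p (mAct ⟨p.val + 1, by omega⟩ (mAct p τ)) =
      mAct ⟨p.val + 1, by omega⟩ (mAct p (mAct ⟨p.val + 1, by omega⟩ τ)) := by decide

lemma braid_small {m : ℕ} (hm : m ≤ 6) (τ : Equiv.Perm (Fin m)) (hτ : τ * τ = 1)
    (p : Fin m) (hp : p.val + 2 < m) :
    mAct p (mAct ⟨p.val + 1, Nat.lt_of_succ_lt hp⟩ (mAct p τ)) =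
      mAct ⟨p.val + 1, Nat.lt_of_succ_lt hp⟩ (mAct p (mAct ⟨p.val + 1, Nat.lt_of_succ_lt hp⟩ τ)) := by
  interval_cases m
  · exact absurd hp (by omega)
  · exact absurd hp (by omega)
  · exact absurd hp (by omega)
  · exact braid3 τ hτ p hp
  · exact braid4 τ hτ p hp
  · exact braid5 τ hτ p hp
  · exact braid6 τ hτ p hp

end BraidAux

/-- The operators `m(s_i)` on involutions satisfy the braid relation:
`m(s_i)·(m(s_{i+1})·(m(s_i)·τ)) = m(s_{i+1})·(m(s_i)·(m(s_{i+1})·τ))`. -/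
theorem mAct_braid (n : ℕ) (i : Fin n) (hi : i.val + 2 < n)
    (τ : Equiv.Perm (Fin n)) (hτ : τ * τ = 1) :
    mAct i (mAct ⟨i.val + 1, by omega⟩ (mAct i τ)) =
      mAct ⟨i.val + 1, by omega⟩ (mAct i (mAct ⟨i.val + 1, by omega⟩ τ)) := by
  classical
  have hb : i.val + 1 < n := by omega
  have hτap := BraidAux.apply_apply_of_invol hτ
  set b : Fin n := ⟨i.val + 1, hb⟩ with hbdef
  set c : Fin n := ⟨i.val + 2, hi⟩ with hcdef
  have hbval : b.val = i.val + 1 := rfl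
  have hcval : c.val = i.val + 2 := rfl
  show mAct i (mAct b (mAct i τ)) = mAct b (mAct i (mAct b τ))
  set S : Finset (Fin n) := {i, b, c, τ i, τ b, τ c} with hSdef
  have hiS : i ∈ S := by simp [hSdef]
  have hbS : b ∈ S := by simp [hSdef]
  have hcS : c ∈ S := by simp [hSdef]
  have HS : ∀ x, x ∈ S ↔ τ x ∈ S := by
    have fwd : ∀ x ∈ S, τ x ∈ S := by
      intro x hx
      simp only [hSdef, Finset.mem_insert, Finset.mem_singleton] at hx ⊢
      rcases hx with h | h | h | h | h | h <;> subst h <;> simp [hτap]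
    intro x
    exact ⟨fwd x, fun hx => by have := fwd _ hx; rwa [hτap] at this⟩
  have hcard : S.card ≤ 6 := by
    rw [hSdef]
    refine le_trans (Finset.card_insert_le _ _) (Nat.succ_le_succ ?_)
    refine le_trans (Finset.card_insert_le _ _) (Nat.succ_le_succ ?_)
    refine le_trans (Finset.card_insert_le _ _) (Nat.succ_le_succ ?_)
    refine le_trans (Finset.card_insert_le _ _) (Nat.succ_le_succ ?_)
    refine le_trans (Finset.card_insert_le _ _) (Nat.succ_le_succ ?_)
    simp
  set e := S.orderIsoOfFin rfl with he
  set p := e.symm ⟨i, hiS⟩ with hpdef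
  set q0 := e.symm ⟨b, hbS⟩ with hq0def
  set r0 := e.symm ⟨c, hcS⟩ with hr0def
  have hpa : (e p : Fin n) = i := by rw [hpdef]; simp
  have hqa : (e q0 : Fin n) = b := by rw [hq0def]; simp
  have hra : (e r0 : Fin n) = c := by rw [hr0def]; simp
  have hltpq : p < q0 := by
    rw [← OrderIso.lt_iff_lt e, ← Subtype.coe_lt_coe, hpa, hqa]
    exact Fin.lt_def.mpr (by omega)
  have hltqr : q0 < r0 := by
    rw [← OrderIso.lt_iff_lt e, ← Subtype.coe_lt_coe, hqa, hra]
    exact Fin.lt_def.mpr (by omega)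
  have hq1 : q0.val = p.val + 1 := by
    by_contra hne
    have hplt : p.val < q0.val := Fin.lt_def.mp hltpq
    have hlt2 : p.val + 1 < q0.val := by omega
    set z : Fin S.card := ⟨p.val + 1, lt_trans hlt2 q0.isLt⟩ with hzdef
    have hz1 : p < z := Fin.lt_def.mpr (Nat.lt_succ_self _)
    have hz2 : z < q0 := Fin.lt_def.mpr hlt2
    have hA : (i : Fin n) < (e z : Fin n) := by
      rw [← hpa]; exact Subtype.coe_lt_coe.mpr ((OrderIso.lt_iff_lt e).mpr hz1)
    have hB : ((e z : Fin n)) < b := by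
      rw [← hqa]; exact Subtype.coe_lt_coe.mpr ((OrderIso.lt_iff_lt e).mpr hz2)
    have hA' := Fin.lt_def.mp hA
    have hB' := Fin.lt_def.mp hB
    omega
  have hr1 : r0.val = q0.val + 1 := by
    by_contra hne
    have hplt : q0.val < r0.val := Fin.lt_def.mp hltqr
    have hlt2 : q0.val + 1 < r0.val := by omega
    set z : Fin S.card := ⟨q0.val + 1, lt_trans hlt2 r0.isLt⟩ with hzdef
    have hz1 : q0 < z := Fin.lt_def.mpr (Nat.lt_succ_self _)
    have hz2 : z < r0 := Fin.lt_def.mpr hlt2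
    have hA : (b : Fin n) < (e z : Fin n) := by
      rw [← hqa]; exact Subtype.coe_lt_coe.mpr ((OrderIso.lt_iff_lt e).mpr hz1)
    have hB : ((e z : Fin n)) < c := by
      rw [← hra]; exact Subtype.coe_lt_coe.mpr ((OrderIso.lt_iff_lt e).mpr hz2)
    have hA' := Fin.lt_def.mp hA
    have hB' := Fin.lt_def.mp hB
    omega
  have hpm : p.val + 2 < S.card := by have := r0.isLt; omega
  have hpm1 : p.val + 1 < S.card := by omega
  have hqm1 : q0.val + 1 < S.card := by omega
  have hq0eq : q0 = ⟨p.val + 1, hpm1⟩ := Fin.ext hq1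
  have hr0eq : r0 = ⟨q0.val + 1, hqm1⟩ := Fin.ext hr1
  have hb2 : b.val + 1 < n := by omega
  have hceqb : (⟨b.val + 1, hb2⟩ : Fin n) = c := Fin.ext rfl
  have hpb : (e ⟨p.val + 1, hpm1⟩ : Fin n) = ⟨i.val + 1, hb⟩ := by
    rw [← hq0eq, hqa]
  have hqb : (e ⟨q0.val + 1, hqm1⟩ : Fin n) = ⟨b.val + 1, hb2⟩ := by
    rw [← hr0eq, hra, hceqb]
  set τ' := BraidAux.localize S rfl τ with hτ'def
  have hτ'2 : τ' * τ' = 1 := BraidAux.localize_invol S rfl τ hτ HS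
  -- LEFT CHAIN
  obtain ⟨T1a, T1b⟩ := BraidAux.mAct_transfer S rfl τ hτ HS i hb p hpm1 hpa hpb
  set τ1 := mAct i τ with hτ1def
  have hτ12 : τ1 * τ1 = 1 := BraidAux.mAct_invol i τ hτ
  have HS1 : ∀ x, x ∈ S ↔ τ1 x ∈ S := by
    have fwd : ∀ x ∈ S, τ1 x ∈ S := by
      intro x hx
      have hxe : x = (e (e.symm ⟨x, hx⟩) : Fin n) := by simp
      rw [hxe, T1a]; exact (e _).2
    intro x
    exact ⟨fwd x, fun hx => by
      have := fwd _ hx; rwa [BraidAux.apply_apply_of_invol hτ12] at this⟩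
  have hloc1 : BraidAux.localize S rfl τ1 = mAct p τ' := by
    apply Equiv.ext; intro y
    apply BraidAux.coe_injective S rfl
    show (e (BraidAux.localize S rfl τ1 y) : Fin n) = (e (mAct p τ' y) : Fin n)
    rw [BraidAux.localize_apply S rfl τ1 HS1, T1a]
  obtain ⟨T2a, T2b⟩ := BraidAux.mAct_transfer S rfl τ1 hτ12 HS1 b hb2 q0 hqm1 hqa hqb
  set τ2 := mAct b τ1 with hτ2def
  have hτ22 : τ2 * τ2 = 1 := BraidAux.mAct_invol b τ1 hτ12
  have HS2 : ∀ x, x ∈ S ↔ τ2 x ∈ S := by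
    have fwd : ∀ x ∈ S, τ2 x ∈ S := by
      intro x hx
      have hxe : x = (e (e.symm ⟨x, hx⟩) : Fin n) := by simp
      rw [hxe, T2a]; exact (e _).2
    intro x
    exact ⟨fwd x, fun hx => by
      have := fwd _ hx; rwa [BraidAux.apply_apply_of_invol hτ22] at this⟩
  have hloc2 : BraidAux.localize S rfl τ2 = mAct q0 (mAct p τ') := by
    apply Equiv.ext; intro y
    apply BraidAux.coe_injective S rfl
    show (e (BraidAux.localize S rfl τ2 y) : Fin n) = (e (mAct q0 (mAct p τ') y) : Fin n)
    rw [BraidAux.localize_apply S rfl τ2 HS2, T2a, hloc1]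
  obtain ⟨T3a, T3b⟩ := BraidAux.mAct_transfer S rfl τ2 hτ22 HS2 i hb p hpm1 hpa hpb
  -- RIGHT CHAIN
  obtain ⟨U1a, U1b⟩ := BraidAux.mAct_transfer S rfl τ hτ HS b hb2 q0 hqm1 hqa hqb
  set ρ1 := mAct b τ with hρ1def
  have hρ12 : ρ1 * ρ1 = 1 := BraidAux.mAct_invol b τ hτ
  have HS1' : ∀ x, x ∈ S ↔ ρ1 x ∈ S := by
    have fwd : ∀ x ∈ S, ρ1 x ∈ S := by
      intro x hx
      have hxe : x = (e (e.symm ⟨x, hx⟩) : Fin n) := by simp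
      rw [hxe, U1a]; exact (e _).2
    intro x
    exact ⟨fwd x, fun hx => by
      have := fwd _ hx; rwa [BraidAux.apply_apply_of_invol hρ12] at this⟩
  have hloc1' : BraidAux.localize S rfl ρ1 = mAct q0 τ' := by
    apply Equiv.ext; intro y
    apply BraidAux.coe_injective S rfl
    show (e (BraidAux.localize S rfl ρ1 y) : Fin n) = (e (mAct q0 τ' y) : Fin n)
    rw [BraidAux.localize_apply S rfl ρ1 HS1', U1a]
  obtain ⟨U2a, U2b⟩ := BraidAux.mAct_transfer S rfl ρ1 hρ12 HS1' i hb p hpm1 hpa hpb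
  set ρ2 := mAct i ρ1 with hρ2def
  have hρ22 : ρ2 * ρ2 = 1 := BraidAux.mAct_invol i ρ1 hρ12
  have HS2' : ∀ x, x ∈ S ↔ ρ2 x ∈ S := by
    have fwd : ∀ x ∈ S, ρ2 x ∈ S := by
      intro x hx
      have hxe : x = (e (e.symm ⟨x, hx⟩) : Fin n) := by simp
      rw [hxe, U2a]; exact (e _).2
    intro x
    exact ⟨fwd x, fun hx => by
      have := fwd _ hx; rwa [BraidAux.apply_apply_of_invol hρ22] at this⟩
  have hloc2' : BraidAux.localize S rfl ρ2 = mAct p (mAct q0 τ') := by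
    apply Equiv.ext; intro y
    apply BraidAux.coe_injective S rfl
    show (e (BraidAux.localize S rfl ρ2 y) : Fin n) = (e (mAct p (mAct q0 τ') y) : Fin n)
    rw [BraidAux.localize_apply S rfl ρ2 HS2', U2a, hloc1']
  obtain ⟨U3a, U3b⟩ := BraidAux.mAct_transfer S rfl ρ2 hρ22 HS2' b hb2 q0 hqm1 hqa hqb
  -- CONCLUDE
  have hbraid := BraidAux.braid_small hcard τ' hτ'2 p hpm
  apply Equiv.ext; intro x
  by_cases hx : x ∈ S
  · have hxe : x = (e (e.symm ⟨x, hx⟩) : Fin n) := by simp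
    set y := e.symm ⟨x, hx⟩
    rw [hxe, T3a, U3a, hloc2, hloc2']
    show (e (mAct p (mAct q0 (mAct p τ')) y) : Fin n) = (e (mAct q0 (mAct p (mAct q0 τ')) y) : Fin n)
    rw [hq0eq]
    exact congrArg (fun π : Equiv.Perm (Fin S.card) => (e (π y) : Fin n)) hbraid
  · rw [T3b x hx, T2b x hx, T1b x hx, U3b x hx, U2b x hx, U1b x hx]
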